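/- For every fixed v ∈ ℝⁿ, the function defined on the open set of n×n symmetric positive definite matrices by F(g) = ½ vᵀ N(g) v, where N(g) = g⁻¹ − g⁻¹Jᵀ(J g⁻¹ Jᵀ)⁻¹J g⁻¹, is differentiable, and for every symmetric positive definite g and every symmetric matrix u its directional derivative equals D F(g)[u] = −½ wᵀ u w, where w = N(g) v. -/

import Mathlib

open Matrix

attribute [local instance] Matrix.normedAddCommGroup Matrix.normedSpace

section auxiliary

variable {a b c k : ℕ}

/-- Matrix multiplication as a continuous bilinear map (sup norm; continuity comes from
finite-dimensionality). -/
noncomputable def mulCLM (a b c : ℕ) :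
    Matrix (Fin a) (Fin b) ℝ →L[ℝ] Matrix (Fin b) (Fin c) ℝ →L[ℝ] Matrix (Fin a) (Fin c) ℝ :=
  LinearMap.toContinuousLinearMap
    { toFun := fun A => LinearMap.toContinuousLinearMap
        { toFun := fun B => A * B
          map_add' := fun B C => Matrix.mul_add A B C
          map_smul' := fun r B => (Matrix.mul_smul A r B : _) }
      map_add' := by
        intro A B
        apply ContinuousLinearMap.ext
        intro C
        simp [Matrix.add_mul]
      map_smul' := by
        intro r A
        apply ContinuousLinearMap.ext
        intro C
        simp [Matrix.smul_mul] }

@[simp] lemma mulCLM_apply (A : Matrix (Fin a) (Fin b) ℝ) (B : Matrix (Fin b) (Fin c) ℝ) :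
    mulCLM a b c A B = A * B := rfl

/-- The entry map as a continuous linear map. -/
noncomputable def entryCLM (i : Fin a) (j : Fin b) : Matrix (Fin a) (Fin b) ℝ →L[ℝ] ℝ :=
  LinearMap.toContinuousLinearMap (Matrix.entryLinearMap ℝ ℝ i j)

@[simp] lemma entryCLM_apply (i : Fin a) (j : Fin b) (A : Matrix (Fin a) (Fin b) ℝ) :
    entryCLM i j A = A i j := rfl

lemma differentiable_entry (i : Fin a) (j : Fin b) :
    Differentiable ℝ (fun X : Matrix (Fin a) (Fin b) ℝ => X i j) :=
  (entryCLM i j).differentiable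

lemma differentiable_det :
    Differentiable ℝ (fun X : Matrix (Fin k) (Fin k) ℝ => X.det) := by
  simp only [Matrix.det_apply]
  apply Differentiable.fun_sum
  intro σ _
  have h : Differentiable ℝ (fun X : Matrix (Fin k) (Fin k) ℝ => ∏ i, X (σ i) i) := by
    intro x
    exact (HasFDerivAt.finset_prod
      (fun i _ => (entryCLM (σ i) i).hasFDerivAt)).differentiableAt
  simpa [Units.smul_def, zsmul_eq_mul] using h.const_mul _

lemma differentiable_updateRow (j : Fin k) (c : Fin k → ℝ) :
    Differentiable ℝ (fun X : Matrix (Fin k) (Fin k) ℝ => X.updateRow j c) := by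
  refine differentiable_pi.mpr ?_
  intro i
  rw [differentiable_pi]
  intro l
  by_cases h : i = j
  · subst h
    simp only [Matrix.updateRow_self]
    exact differentiable_const _
  · simp only [Matrix.updateRow_ne h]
    exact (entryCLM i l).differentiable

lemma differentiable_adjugate :
    Differentiable ℝ (fun X : Matrix (Fin k) (Fin k) ℝ => X.adjugate) := by
  refine differentiable_pi.mpr ?_
  intro i
  rw [differentiable_pi]
  intro j
  simp only [Matrix.adjugate_apply]
  exact differentiable_det.comp (differentiable_updateRow j (Pi.single i 1))

lemma eventually_isUnit_det {A : Matrix (Fin k) (Fin k) ℝ} (hA : IsUnit A.det) :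
    ∀ᶠ X : Matrix (Fin k) (Fin k) ℝ in nhds A, IsUnit X.det := by
  have hcont : Continuous (fun X : Matrix (Fin k) (Fin k) ℝ => X.det) :=
    differentiable_det.continuous
  have hopen : IsOpen {X : Matrix (Fin k) (Fin k) ℝ | X.det ≠ 0} :=
    (isOpen_compl_singleton (x := (0 : ℝ))).preimage hcont
  have hmem : A ∈ {X : Matrix (Fin k) (Fin k) ℝ | X.det ≠ 0} := by
    simpa [isUnit_iff_ne_zero] using hA
  filter_upwards [hopen.mem_nhds hmem] with X hX
  exact isUnit_iff_ne_zero.mpr hX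

lemma differentiableAt_matrix_inv {A : Matrix (Fin k) (Fin k) ℝ} (hA : IsUnit A.det) :
    DifferentiableAt ℝ (fun X : Matrix (Fin k) (Fin k) ℝ => X⁻¹) A := by
  have h1 : DifferentiableAt ℝ
      (fun X : Matrix (Fin k) (Fin k) ℝ => (X.det)⁻¹ • X.adjugate) A := by
    apply DifferentiableAt.fun_smul
    · exact (differentiable_det.differentiableAt).inv (by simpa [isUnit_iff_ne_zero] using hA)
    · exact differentiable_adjugate.differentiableAt
  apply h1.congr_of_eventuallyEq
  filter_upwards [eventually_isUnit_det hA] with X hX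
  rw [Matrix.inv_def, Ring.inverse_eq_inv']

/-- The derivative of matrix inversion, as a continuous linear map: `u ↦ -(A⁻¹ * u * A⁻¹)`. -/
noncomputable def invDeriv (A : Matrix (Fin k) (Fin k) ℝ) :
    Matrix (Fin k) (Fin k) ℝ →L[ℝ] Matrix (Fin k) (Fin k) ℝ :=
  -(((mulCLM k k k).flip A⁻¹).comp ((mulCLM k k k) A⁻¹))

@[simp] lemma invDeriv_apply (A u : Matrix (Fin k) (Fin k) ℝ) :
    invDeriv A u = -(A⁻¹ * u * A⁻¹) := by
  rfl

lemma hasFDerivAt_matrix_inv (A : Matrix (Fin k) (Fin k) ℝ) (hA : IsUnit A.det) :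
    HasFDerivAt (fun X : Matrix (Fin k) (Fin k) ℝ => X⁻¹) (invDeriv A) A := by
  obtain ⟨D, hD⟩ : ∃ D, HasFDerivAt (fun X : Matrix (Fin k) (Fin k) ℝ => X⁻¹) D A :=
    ⟨_, (differentiableAt_matrix_inv hA).hasFDerivAt⟩
  have hmul : HasFDerivAt (fun X : Matrix (Fin k) (Fin k) ℝ => (mulCLM k k k) X X⁻¹)
      ((mulCLM k k k).precompR _ A D + (mulCLM k k k).precompL _ (ContinuousLinearMap.id ℝ _) A⁻¹)
      A :=
    (mulCLM k k k).hasFDerivAt_of_bilinear (hasFDerivAt_id A) hD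
  have hone : HasFDerivAt (fun X : Matrix (Fin k) (Fin k) ℝ => (mulCLM k k k) X X⁻¹)
      (0 : Matrix (Fin k) (Fin k) ℝ →L[ℝ] Matrix (Fin k) (Fin k) ℝ) A := by
    have : (fun _ : Matrix (Fin k) (Fin k) ℝ => (1 : Matrix (Fin k) (Fin k) ℝ))
        =ᶠ[nhds A] (fun X => (mulCLM k k k) X X⁻¹) := by
      filter_upwards [eventually_isUnit_det hA] with X hX
      rw [mulCLM_apply, Matrix.mul_nonsing_inv _ hX]
    exact (hasFDerivAt_const _ _).congr_of_eventuallyEq this.symm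
  have heq := hmul.unique hone
  have key : ∀ u, A * D u + u * A⁻¹ = 0 := by
    intro u
    have := congrArg (fun (T : Matrix (Fin k) (Fin k) ℝ →L[ℝ] Matrix (Fin k) (Fin k) ℝ) => T u) heq
    exact this
  have hDeq : invDeriv A = D := by
    apply ContinuousLinearMap.ext
    intro u
    have h := key u
    have h2 : A * D u = -(u * A⁻¹) := by linear_combination (norm := abel) h
    have h3 : A⁻¹ * (A * D u) = A⁻¹ * -(u * A⁻¹) := by rw [h2]
    rw [← Matrix.mul_assoc, Matrix.nonsing_inv_mul _ hA, Matrix.one_mul] at h3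
    rw [invDeriv_apply, h3]
    simp [Matrix.mul_assoc]
  rw [hDeq]
  exact hD

end auxiliary

noncomputable def phiCLM {n : ℕ} (v : Fin n → ℝ) : Matrix (Fin n) (Fin n) ℝ →L[ℝ] ℝ :=
  LinearMap.toContinuousLinearMap
    { toFun := fun X => (1 / 2) * (v ⬝ᵥ (X *ᵥ v))
      map_add' := fun X Y => by
        show (1 / 2) * (v ⬝ᵥ ((X + Y) *ᵥ v)) = _
        rw [Matrix.add_mulVec, dotProduct_add]; ring
      map_smul' := fun r X => by
        show (1 / 2) * (v ⬝ᵥ ((r • X) *ᵥ v)) = _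
        rw [Matrix.smul_mulVec, dotProduct_smul]
        simp; ring }

@[simp] lemma phiCLM_apply {n : ℕ} (v : Fin n → ℝ) (X : Matrix (Fin n) (Fin n) ℝ) :
    phiCLM v X = (1 / 2) * (v ⬝ᵥ (X *ᵥ v)) := rfl

set_option maxHeartbeats 1000000 in
theorem hasFDerivAt_kinetic {n m : ℕ} (hm : 0 < m) (hmn : m < n)
    (J : Matrix (Fin m) (Fin n) ℝ) (hJ : J.rank = m)
    (v : Fin n → ℝ)
    (N : Matrix (Fin n) (Fin n) ℝ → Matrix (Fin n) (Fin n) ℝ)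
    (hN : ∀ X : Matrix (Fin n) (Fin n) ℝ,
      N X = X⁻¹ - X⁻¹ * Jᵀ * (J * X⁻¹ * Jᵀ)⁻¹ * J * X⁻¹)
    (F : Matrix (Fin n) (Fin n) ℝ → ℝ)
    (hF : ∀ X : Matrix (Fin n) (Fin n) ℝ, F X = (1 / 2) * (v ⬝ᵥ (N X *ᵥ v))) :
    ∀ g : Matrix (Fin n) (Fin n) ℝ, g.PosDef →
      ∃ f' : Matrix (Fin n) (Fin n) ℝ →L[ℝ] ℝ, HasFDerivAt F f' g ∧
        ∀ u : Matrix (Fin n) (Fin n) ℝ, u.IsSymm →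
          f' u = -(1 / 2) * ((N g *ᵥ v) ⬝ᵥ (u *ᵥ (N g *ᵥ v))) := by
  intro g hg
  have hMpd : (J * g⁻¹ * Jᵀ).PosDef := by
    have hsurj : Function.Surjective (J.mulVecLin) := by
      rw [← LinearMap.range_eq_top]
      apply Submodule.eq_top_of_finrank_eq
      rw [Matrix.rank] at hJ
      rw [hJ]
      simp
    have hker : ∀ x : Fin m → ℝ, Jᵀ *ᵥ x = 0 → x = 0 := by
      intro x hx
      have hx' : x ᵥ* J = 0 := by rwa [← Matrix.mulVec_transpose]
      obtain ⟨y, hy⟩ := hsurj x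
      have : x ⬝ᵥ x = 0 := by
        nth_rewrite 2 [← hy]
        rw [Matrix.mulVecLin_apply, Matrix.dotProduct_mulVec, hx', zero_dotProduct]
      exact dotProduct_self_eq_zero.mp this
    have hginv : (g⁻¹).PosDef := hg.inv
    have hgT : gᵀ = g := by
      have := hg.isHermitian
      rwa [Matrix.IsHermitian, Matrix.conjTranspose_eq_transpose_of_trivial] at this
    refine Matrix.PosDef.of_dotProduct_mulVec_pos ?_ ?_
    · show (J * g⁻¹ * Jᵀ)ᴴ = _
      rw [Matrix.conjTranspose_eq_transpose_of_trivial]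
      rw [Matrix.transpose_mul, Matrix.transpose_mul, Matrix.transpose_transpose,
        Matrix.transpose_nonsing_inv, hgT, Matrix.mul_assoc]
    · intro x hx
      have hxj : Jᵀ *ᵥ x ≠ 0 := fun h => hx (hker x h)
      have := hginv.dotProduct_mulVec_pos (x := Jᵀ *ᵥ x) hxj
      simpa [← Matrix.mulVec_mulVec, Matrix.dotProduct_mulVec x J, Matrix.mulVec_transpose]
        using this
  have hgdet : IsUnit g.det := isUnit_iff_ne_zero.mpr hg.det_pos.ne'
  have hMdet : IsUnit (J * g⁻¹ * Jᵀ).det := isUnit_iff_ne_zero.mpr hMpd.det_pos.ne'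
  -- derivatives
  have hInv : HasFDerivAt (fun X : Matrix (Fin n) (Fin n) ℝ => X⁻¹) (invDeriv g) g :=
    hasFDerivAt_matrix_inv g hgdet
  -- sandwich J * X⁻¹ * Jᵀ
  have hSand : HasFDerivAt (fun X : Matrix (Fin n) (Fin n) ℝ => J * X⁻¹ * Jᵀ)
      ((((mulCLM m n m).flip Jᵀ).comp ((mulCLM m n n) J)).comp (invDeriv g)) g := by
    refine (((((mulCLM m n m).flip Jᵀ).comp ((mulCLM m n n) J)).hasFDerivAt.comp g
      hInv).congr_of_eventuallyEq ?_)
    exact Filter.Eventually.of_forall fun X => rfl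
  have hK : HasFDerivAt (fun X : Matrix (Fin n) (Fin n) ℝ => (J * X⁻¹ * Jᵀ)⁻¹)
      ((invDeriv (J * g⁻¹ * Jᵀ)).comp
        ((((mulCLM m n m).flip Jᵀ).comp ((mulCLM m n n) J)).comp (invDeriv g))) g :=
    (hasFDerivAt_matrix_inv (J * g⁻¹ * Jᵀ) hMdet).comp g hSand
  have ht1 : HasFDerivAt (fun X : Matrix (Fin n) (Fin n) ℝ => X⁻¹ * Jᵀ)
      (((mulCLM n n m).flip Jᵀ).comp (invDeriv g)) g := by
    refine (((mulCLM n n m).flip Jᵀ).hasFDerivAt.comp g hInv).congr_of_eventuallyEq ?_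
    exact Filter.Eventually.of_forall fun X => rfl
  have ht2 := (mulCLM n m m).hasFDerivAt_of_bilinear ht1 hK
  have ht3 : HasFDerivAt (fun X : Matrix (Fin n) (Fin n) ℝ => X⁻¹ * Jᵀ * (J * X⁻¹ * Jᵀ)⁻¹ * J)
      (((mulCLM n m n).flip J).comp
        ((mulCLM n m m).precompR (Matrix (Fin n) (Fin n) ℝ) (g⁻¹ * Jᵀ)
            ((invDeriv (J * g⁻¹ * Jᵀ)).comp
              ((((mulCLM m n m).flip Jᵀ).comp ((mulCLM m n n) J)).comp (invDeriv g))) +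
          (mulCLM n m m).precompL (Matrix (Fin n) (Fin n) ℝ) (((mulCLM n n m).flip Jᵀ).comp (invDeriv g))
            ((J * g⁻¹ * Jᵀ)⁻¹))) g := by
    refine (((mulCLM n m n).flip J).hasFDerivAt.comp g ht2).congr_of_eventuallyEq ?_
    exact Filter.Eventually.of_forall fun X => rfl
  have ht4 := ContinuousLinearMap.hasFDerivAt_of_bilinear (𝕜 := ℝ) (mulCLM n n n) ht3 hInv
  have hGfull := HasFDerivAt.sub (𝕜 := ℝ) hInv ht4
  have hNe : N =ᶠ[nhds g]
      (fun x : Matrix (Fin n) (Fin n) ℝ =>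
        x⁻¹ - (mulCLM n n n) (x⁻¹ * Jᵀ * (J * x⁻¹ * Jᵀ)⁻¹ * J) x⁻¹) :=
    Filter.Eventually.of_forall fun X => by rw [hN X]; simp
  have hG := hGfull.congr_of_eventuallyEq hNe
  have hFe : F =ᶠ[nhds g] (⇑(phiCLM v) ∘ N) :=
    Filter.Eventually.of_forall fun X => by rw [hF X]; simp [Function.comp]
  have hFd := ((phiCLM v).hasFDerivAt.comp g hG).congr_of_eventuallyEq hFe
  refine ⟨_, hFd, fun u hu => ?_⟩
  have hgT : gᵀ = g := by
    have := hg.isHermitian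
    rwa [Matrix.IsHermitian, Matrix.conjTranspose_eq_transpose_of_trivial] at this
  have hAT : (g⁻¹)ᵀ = g⁻¹ := by rw [Matrix.transpose_nonsing_inv, hgT]
  have hMT : (J * g⁻¹ * Jᵀ)ᵀ = J * g⁻¹ * Jᵀ := by
    have := hMpd.isHermitian
    rwa [Matrix.IsHermitian, Matrix.conjTranspose_eq_transpose_of_trivial] at this
  have hKT : ((J * g⁻¹ * Jᵀ)⁻¹)ᵀ = (J * g⁻¹ * Jᵀ)⁻¹ := by
    rw [Matrix.transpose_nonsing_inv, hMT]
  have hNgT : (N g)ᵀ = N g := by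
    rw [hN]
    simp [Matrix.transpose_sub, Matrix.transpose_mul, Matrix.transpose_transpose,
      Matrix.transpose_nonsing_inv, hgT, hMT, Matrix.mul_assoc]
  show (1 / 2) * (v ⬝ᵥ (_ *ᵥ v)) = _
  refine (congrArg (fun M : Matrix (Fin n) (Fin n) ℝ => (1 / 2) * (v ⬝ᵥ (M *ᵥ v)))
    (?_ : _ = -(N g * u * N g))).trans ?_
  · rw [hN]
    show -(g⁻¹ * u * g⁻¹) - ((g⁻¹ * Jᵀ * (J * g⁻¹ * Jᵀ)⁻¹ * J) * -(g⁻¹ * u * g⁻¹) +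
      ((g⁻¹ * Jᵀ) * -((J * g⁻¹ * Jᵀ)⁻¹ * (J * -(g⁻¹ * u * g⁻¹) * Jᵀ) * (J * g⁻¹ * Jᵀ)⁻¹) +
        (-(g⁻¹ * u * g⁻¹) * Jᵀ) * (J * g⁻¹ * Jᵀ)⁻¹) * J * g⁻¹) = _
    simp only [Matrix.mul_sub, Matrix.sub_mul, Matrix.mul_add, Matrix.add_mul,
      Matrix.mul_neg, Matrix.neg_mul, neg_neg, neg_sub, Matrix.mul_assoc]
    abel
  show (1 / 2) * (v ⬝ᵥ ((-(N g * u * N g)) *ᵥ v)) = _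
  rw [Matrix.neg_mulVec, dotProduct_neg]
  rw [show (N g * u * N g) *ᵥ v = N g *ᵥ (u *ᵥ (N g *ᵥ v)) by
    rw [← Matrix.mulVec_mulVec, ← Matrix.mulVec_mulVec]]
  rw [Matrix.dotProduct_mulVec v (N g)]
  rw [← Matrix.mulVec_transpose, hNgT]
  ring
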